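/- For the hard randomized smoothing setting: let f : ℝ^d → {1,...,K} be measurable, σ > 0, and for each class c define P_c(x) = P_{η~N(0,σ²I)}(f(x+η) = c). Then each P_c takes values in [0,1] and Σ_c P_c(x) = 1 for all x; moreover, x ↦ Φ⁻¹(P_c(x)) is (1/σ)-Lipschitz wherever P_c(x) ∈ (0,1). -/

import Mathlib

open MeasureTheory Real Set

noncomputable def Phi (x : ℝ) : ℝ :=
  ∫ t in Set.Iic x, (Real.sqrt (2 * Real.pi))⁻¹ * Real.exp (-t ^ 2 / 2)

noncomputable def PhiInv : ℝ → ℝ := Function.invFun Phi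

noncomputable def gaussMeasure (d : ℕ) (σ : ℝ) :
    Measure (EuclideanSpace ℝ (Fin d)) :=
  volume.withDensity fun x =>
    ENNReal.ofReal ((2 * Real.pi * σ ^ 2) ^ (-(d : ℝ) / 2) *
      Real.exp (-‖x‖ ^ 2 / (2 * σ ^ 2)))
open scoped Classical

open scoped NNReal ENNReal

noncomputable def phi (t : ℝ) : ℝ := (Real.sqrt (2 * Real.pi))⁻¹ * Real.exp (-t ^ 2 / 2)

lemma phi_pos (t : ℝ) : 0 < phi t := by
  have h : (0:ℝ) < Real.sqrt (2 * Real.pi) := Real.sqrt_pos.2 (by positivity)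
  exact mul_pos (inv_pos.2 h) (Real.exp_pos _)

lemma continuous_phi : Continuous phi := by
  unfold phi; fun_prop

lemma integrable_phi : Integrable phi := by
  have h : Integrable (fun t : ℝ => Real.exp (-(1/2 : ℝ) * t ^ 2)) :=
    integrable_exp_neg_mul_sq (by norm_num)
  have := h.const_mul (Real.sqrt (2 * Real.pi))⁻¹
  refine this.congr (Filter.Eventually.of_forall fun t => ?_)
  unfold phi; ring_nf

lemma integral_phi : ∫ t, phi t = 1 := by
  unfold phi
  rw [MeasureTheory.integral_const_mul]
  have : ∀ t : ℝ, Real.exp (-t ^ 2 / 2) = Real.exp (-(1/2 : ℝ) * t ^ 2) := by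
    intro t; ring_nf
  simp_rw [this, integral_gaussian]
  rw [show (π : ℝ) / (1/2) = 2 * π by ring]
  field_simp

lemma Phi_eq (x : ℝ) : Phi x = ∫ t in Iic x, phi t := rfl

lemma Phi_add_Ioc {x y : ℝ} (h : x ≤ y) : Phi y = Phi x + ∫ t in Ioc x y, phi t := by
  rw [Phi_eq, Phi_eq, ← MeasureTheory.setIntegral_union (Iic_disjoint_Ioc le_rfl)
    measurableSet_Ioc integrable_phi.integrableOn integrable_phi.integrableOn,
    Iic_union_Ioc_eq_Iic h]

lemma phi_le (t : ℝ) : phi t ≤ (Real.sqrt (2 * Real.pi))⁻¹ := by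
  unfold phi
  have h : Real.exp (-t ^ 2 / 2) ≤ 1 := Real.exp_le_one_iff.2 (by nlinarith [sq_nonneg t])
  have h0 : (0:ℝ) ≤ (Real.sqrt (2 * Real.pi))⁻¹ := by positivity
  nlinarith

lemma integral_phi_Ioc_pos {x y : ℝ} (h : x < y) : 0 < ∫ t in Ioc x y, phi t := by
  obtain ⟨t₀, ht₀, hmin⟩ := isCompact_Icc.exists_isMinOn (nonempty_Icc.2 h.le)
    continuous_phi.continuousOn
  have hle : phi t₀ * (volume (Ioc x y)).toReal ≤ ∫ t in Ioc x y, phi t := by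
    rw [show phi t₀ * (volume (Ioc x y)).toReal = volume.real (Ioc x y) • phi t₀ by
      rw [smul_eq_mul, mul_comm]; rfl]
    apply MeasureTheory.setIntegral_ge_of_const_le measurableSet_Ioc
    · rw [Real.volume_Ioc]; exact ENNReal.ofReal_ne_top
    · exact fun t ht => hmin (Ioc_subset_Icc_self ht)
    · exact integrable_phi.integrableOn
  have hv : (volume (Ioc x y)).toReal = y - x := by
    rw [Real.volume_Ioc, ENNReal.toReal_ofReal (by linarith)]
  have := phi_pos t₀
  rw [hv] at hle
  nlinarith

lemma strictMono_Phi : StrictMono Phi := by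
  intro x y hxy
  rw [Phi_add_Ioc hxy.le]
  have := integral_phi_Ioc_pos hxy
  linarith

lemma Phi_sub_le {x y : ℝ} (h : x ≤ y) :
    Phi y - Phi x ≤ (Real.sqrt (2 * Real.pi))⁻¹ * (y - x) := by
  rw [Phi_add_Ioc h]
  have h1 : ∫ t in Ioc x y, phi t ≤ ∫ _t in Ioc x y, (Real.sqrt (2 * Real.pi))⁻¹ := by
    apply MeasureTheory.setIntegral_mono_on integrable_phi.integrableOn
      (MeasureTheory.integrableOn_const (by rw [Real.volume_Ioc]; exact ENNReal.ofReal_ne_top))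
      measurableSet_Ioc
    exact fun t _ => phi_le t
  rw [MeasureTheory.setIntegral_const, Real.volume_real_Ioc_of_le h] at h1
  rw [smul_eq_mul] at h1
  linarith [mul_comm (y - x) (Real.sqrt (2 * Real.pi))⁻¹]

lemma Phi_mono : Monotone Phi := strictMono_Phi.monotone

lemma continuous_Phi : Continuous Phi := by
  rw [Metric.continuous_iff]
  intro x ε hε
  set K : ℝ := (Real.sqrt (2 * Real.pi))⁻¹ with hK
  have hKpos : 0 < K := by positivity
  refine ⟨ε / K, by positivity, fun y hy => ?_⟩
  rw [Real.dist_eq] at hy ⊢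
  have key : ∀ a b : ℝ, a ≤ b → |Phi b - Phi a| ≤ K * (b - a) := by
    intro a b hab
    rw [abs_of_nonneg (by linarith [Phi_mono hab])]
    exact Phi_sub_le hab
  rcases le_total x y with h | h
  · have := key x y h
    have h2 : |y - x| < ε / K := hy
    rw [abs_of_nonneg (by linarith)] at h2
    calc |Phi y - Phi x| ≤ K * (y - x) := this
      _ < K * (ε / K) := by apply mul_lt_mul_of_pos_left h2 hKpos
      _ = ε := by field_simp
  · have := key y x h
    have h2 : |y - x| < ε / K := hy
    rw [abs_of_nonpos (by linarith), neg_sub] at h2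
    rw [abs_sub_comm]
    calc |Phi x - Phi y| ≤ K * (x - y) := this
      _ < K * (ε / K) := by apply mul_lt_mul_of_pos_left h2 hKpos
      _ = ε := by field_simp

lemma integral_phi_Ioi (x : ℝ) : ∫ t in Ioi x, phi t = 1 - Phi x := by
  have := MeasureTheory.integral_add_compl (measurableSet_Iic (a := x)) integrable_phi
  rw [compl_Iic] at this
  rw [integral_phi] at this
  rw [Phi_eq]; linarith

lemma Phi_neg (x : ℝ) : Phi (-x) = 1 - Phi x := by
  rw [Phi_eq, ← integral_comp_neg_Ioi]
  have : ∀ t : ℝ, phi (-t) = phi t := by intro t; unfold phi; ring_nf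
  simp_rw [this, integral_phi_Ioi]

lemma Phi_pos (x : ℝ) : 0 < Phi x := by
  have h1 : Phi x = Phi (x - 1) + ∫ t in Ioc (x-1) x, phi t := Phi_add_Ioc (by linarith)
  have h2 : 0 ≤ Phi (x - 1) := by
    rw [Phi_eq]
    exact MeasureTheory.setIntegral_nonneg measurableSet_Iic fun t _ => (phi_pos t).le
  have h3 := integral_phi_Ioc_pos (show x - 1 < x by linarith)
  linarith

lemma Phi_mem_Ioo (x : ℝ) : Phi x ∈ Ioo (0:ℝ) 1 := by
  refine ⟨Phi_pos x, ?_⟩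
  have := Phi_pos (-x)
  rw [Phi_neg] at this
  linarith

lemma tendsto_Phi_nat : Filter.Tendsto (fun n : ℕ => Phi n) Filter.atTop (nhds 1) := by
  have hU : (⋃ n : ℕ, Iic (n : ℝ)) = univ := by
    rw [eq_univ_iff_forall]
    intro x
    obtain ⟨n, hn⟩ := exists_nat_ge x
    exact mem_iUnion.2 ⟨n, hn⟩
  have := MeasureTheory.tendsto_setIntegral_of_monotone (μ := volume)
    (s := fun n : ℕ => Iic ((n : ℝ))) (f := phi)
    (fun n => measurableSet_Iic)
    (fun m n hmn => Iic_subset_Iic.2 (by exact_mod_cast hmn))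
    (by rw [hU]; exact integrable_phi.integrableOn)
  rw [hU] at this
  simp only [MeasureTheory.Measure.restrict_univ] at this
  rw [integral_phi] at this
  exact this

lemma exists_Phi_eq {p : ℝ} (hp : p ∈ Ioo (0:ℝ) 1) : ∃ x, Phi x = p := by
  obtain ⟨hp0, hp1⟩ := hp
  have hmax : max p (1 - p) < 1 := by
    rw [max_lt_iff]; constructor <;> linarith
  have hev := tendsto_Phi_nat.eventually (eventually_gt_nhds hmax)
  obtain ⟨n, hn⟩ := hev.exists
  have hn1 : p < Phi n := lt_of_le_of_lt (le_max_left _ _) hn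
  have hn2 : Phi (-(n:ℝ)) < p := by
    rw [Phi_neg]
    have := lt_of_le_of_lt (le_max_right p (1 - p)) hn
    linarith
  have hsub := intermediate_value_Icc (show -(n:ℝ) ≤ n by have : (0:ℝ) ≤ n := Nat.cast_nonneg n; linarith)
    continuous_Phi.continuousOn
  obtain ⟨x, _, hx⟩ := hsub ⟨hn2.le, hn1.le⟩
  exact ⟨x, hx⟩

lemma Phi_PhiInv {p : ℝ} (hp : p ∈ Ioo (0:ℝ) 1) : Phi (PhiInv p) = p := by
  obtain ⟨x, hx⟩ := exists_Phi_eq hp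
  exact Function.invFun_eq ⟨x, hx⟩

lemma PhiInv_ge_of_Phi_le {p c : ℝ} (hp : p ∈ Ioo (0:ℝ) 1) (h : Phi c ≤ p) :
    c ≤ PhiInv p := by
  by_contra hlt
  push_neg at hlt
  have := strictMono_Phi hlt
  rw [Phi_PhiInv hp] at this
  linarith
open scoped NNReal ENNReal

noncomputable def rho (d : ℕ) (σ : ℝ) (x : EuclideanSpace ℝ (Fin d)) : ℝ :=
  (2 * Real.pi * σ ^ 2) ^ (-(d : ℝ) / 2) * Real.exp (-‖x‖ ^ 2 / (2 * σ ^ 2))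

variable {d : ℕ} {σ : ℝ}

lemma rho_pos (hσ : 0 < σ) (x : EuclideanSpace ℝ (Fin d)) : 0 < rho d σ x :=
  mul_pos (Real.rpow_pos_of_pos (by positivity) _) (Real.exp_pos _)

lemma continuous_rho : Continuous (rho d σ) := by
  unfold rho; fun_prop

lemma rho_eq (hσ : 0 < σ) (x : EuclideanSpace ℝ (Fin d)) :
    rho d σ x = (2 * Real.pi * σ ^ 2) ^ (-(d : ℝ) / 2) *
      Real.exp (-((2 * σ ^ 2)⁻¹) * ‖x‖ ^ 2) := by
  unfold rho
  congr 1
  rw [Real.exp_eq_exp]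
  field_simp

lemma integrable_exp_norm (hσ : 0 < σ) :
    Integrable (fun x : EuclideanSpace ℝ (Fin d) =>
      Real.exp (-((2 * σ ^ 2)⁻¹) * ‖x‖ ^ 2)) := by
  have hb : (0:ℝ) < (2 * σ ^ 2)⁻¹ := by positivity
  have h := GaussianFourier.integrable_cexp_neg_mul_sq_norm_add
    (V := EuclideanSpace ℝ (Fin d)) (b := ((2 * σ ^ 2)⁻¹ : ℝ))
    (by rw [Complex.ofReal_re]; exact hb) 0 0
  have h2 := h.norm
  refine h2.congr (Filter.Eventually.of_forall fun x => ?_)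
  show ‖Complex.exp _‖ = _
  rw [Complex.norm_exp]
  congr 1
  simp only [zero_mul, add_zero]
  rw [show ((-((2 * σ ^ 2)⁻¹:ℝ) : ℂ) * (‖x‖:ℂ) ^ 2) = (((-(2 * σ ^ 2)⁻¹ * ‖x‖ ^ 2 : ℝ)) : ℂ) by
    push_cast; ring, Complex.ofReal_re]

lemma integrable_rho (hσ : 0 < σ) : Integrable (rho d σ) := by
  have := (integrable_exp_norm (d := d) hσ).const_mul
    ((2 * Real.pi * σ ^ 2) ^ (-(d : ℝ) / 2))
  refine this.congr (Filter.Eventually.of_forall fun x => ?_)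
  rw [rho_eq hσ]

lemma integral_rho (hσ : 0 < σ) : ∫ x, rho d σ x = 1 := by
  have hb : (0:ℝ) < (2 * σ ^ 2)⁻¹ := by positivity
  have h := GaussianFourier.integral_rexp_neg_mul_sq_norm
    (V := EuclideanSpace ℝ (Fin d)) hb
  rw [finrank_euclideanSpace_fin] at h
  calc ∫ x, rho d σ x
      = (2 * Real.pi * σ ^ 2) ^ (-(d : ℝ) / 2) *
        ∫ x : EuclideanSpace ℝ (Fin d), Real.exp (-((2 * σ ^ 2)⁻¹) * ‖x‖ ^ 2) := by
        rw [← MeasureTheory.integral_const_mul]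
        exact MeasureTheory.integral_congr_ae (Filter.Eventually.of_forall fun x => rho_eq hσ x)
    _ = (2 * Real.pi * σ ^ 2) ^ (-(d : ℝ) / 2) *
        (2 * Real.pi * σ ^ 2) ^ ((d : ℝ) / 2) := by
        rw [h]
        congr 2
        rw [eq_comm, eq_div_iff (by positivity : ((2 * σ ^ 2)⁻¹ : ℝ) ≠ 0)]
        field_simp
    _ = 1 := by
        rw [← Real.rpow_add (by positivity), show -(d:ℝ)/2 + (d:ℝ)/2 = 0 by ring,
          Real.rpow_zero]

lemma gaussMeasure_eq :
    gaussMeasure d σ = volume.withDensity (fun x => ((Real.toNNReal (rho d σ x) : ℝ≥0) : ℝ≥0∞)) :=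
  rfl

lemma gaussMeasure_eq' :
    gaussMeasure d σ = volume.withDensity (fun x => ENNReal.ofReal (rho d σ x)) :=
  rfl

lemma isProbability_gaussMeasure (hσ : 0 < σ) :
    IsProbabilityMeasure (gaussMeasure d σ) := by
  constructor
  rw [gaussMeasure_eq', withDensity_apply _ MeasurableSet.univ, Measure.restrict_univ]
  have h := MeasureTheory.ofReal_integral_eq_lintegral_ofReal (integrable_rho (d := d) hσ)
    (Filter.Eventually.of_forall fun x => (rho_pos hσ x).le)
  rw [integral_rho hσ] at h
  simp only [ENNReal.ofReal_one] at h
  exact h.symm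

lemma integral_gaussMeasure (hσ : 0 < σ) (g : EuclideanSpace ℝ (Fin d) → ℝ) :
    ∫ x, g x ∂(gaussMeasure d σ) = ∫ x, rho d σ x * g x := by
  rw [gaussMeasure_eq, integral_withDensity_eq_integral_smul
    (continuous_rho.measurable.real_toNNReal) g]
  refine MeasureTheory.integral_congr_ae (Filter.Eventually.of_forall fun x => ?_)
  show ((rho d σ x).toNNReal : ℝ) • g x = _
  rw [smul_eq_mul, Real.coe_toNNReal _ (rho_pos hσ x).le]

noncomputable def g1 (σ : ℝ) (s : ℝ) : ℝ :=
  (2 * Real.pi * σ ^ 2) ^ (-(1 : ℝ) / 2) * Real.exp (-s ^ 2 / (2 * σ ^ 2))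

lemma c1_eq (hσ : 0 < σ) :
    (2 * Real.pi * σ ^ 2) ^ (-(1 : ℝ) / 2) = σ⁻¹ * (Real.sqrt (2 * Real.pi))⁻¹ := by
  have h1 : (2 * Real.pi * σ ^ 2 : ℝ) ^ (-(1 : ℝ) / 2) =
      ((2 * Real.pi * σ ^ 2 : ℝ) ^ ((1 : ℝ) / 2))⁻¹ := by
    rw [← Real.rpow_neg (by positivity)]
    norm_num
  rw [h1, ← Real.sqrt_eq_rpow, Real.sqrt_mul (by positivity), Real.sqrt_sq hσ.le,
    mul_inv]
  ring

lemma g1_eq (hσ : 0 < σ) (s : ℝ) : g1 σ s = σ⁻¹ * phi (σ⁻¹ * s) := by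
  unfold g1 phi
  rw [c1_eq hσ]
  have : (-(σ⁻¹ * s) ^ 2 / 2 : ℝ) = -s ^ 2 / (2 * σ ^ 2) := by
    rw [div_eq_div_iff (by norm_num) (by positivity)]
    field_simp
  rw [this]
  ring

lemma integral_g1 (hσ : 0 < σ) : ∫ s, g1 σ s = 1 := by
  simp_rw [g1_eq hσ]
  rw [MeasureTheory.integral_const_mul, MeasureTheory.Measure.integral_comp_mul_left
    (fun s => phi s) σ⁻¹]
  rw [integral_phi, inv_inv, abs_of_pos hσ]
  simp [inv_mul_cancel₀ hσ.ne']

lemma integral_g1_Ioi (hσ : 0 < σ) (b : ℝ) : ∫ s in Ioi b, g1 σ s = Phi (-b / σ) := by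
  simp_rw [g1_eq hσ]
  rw [MeasureTheory.integral_const_mul,
    integral_comp_mul_left_Ioi (fun s => phi s) b (by positivity : (0:ℝ) < σ⁻¹)]
  rw [smul_eq_mul, inv_inv, integral_phi_Ioi]
  have h2 : Phi (-b / σ) = 1 - Phi (σ⁻¹ * b) := by
    rw [show (-b / σ : ℝ) = -(σ⁻¹ * b) by ring, Phi_neg]
  rw [h2]
  field_simp

lemma marginal (hσ : 0 < σ) {u : EuclideanSpace ℝ (Fin d)} (hu : ‖u‖ = 1) (b : ℝ) :
    ∫ x, (if b ≤ (inner ℝ u x : ℝ) then (1:ℝ) else 0) * rho d σ x = Phi (-b / σ) := by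
  -- d ≥ 1
  have hd : d ≠ 0 := by
    rintro rfl
    have : u = 0 := Subsingleton.elim u 0
    rw [this, norm_zero] at hu
    norm_num at hu
  set i₀ : Fin d := ⟨0, Nat.pos_of_ne_zero hd⟩ with hi₀
  -- orthonormal basis with B i₀ = u
  have hcard : Module.finrank ℝ (EuclideanSpace ℝ (Fin d)) = Fintype.card (Fin d) := by
    rw [finrank_euclideanSpace_fin, Fintype.card_fin]
  have hON : Orthonormal ℝ (Set.restrict ({i₀} : Set (Fin d)) (fun _ => u)) := by
    constructor
    · intro i; exact hu
    · intro i j hij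
      exact absurd (Subtype.ext (by rw [i.2, j.2])) hij
  obtain ⟨B, hB⟩ := hON.exists_orthonormalBasis_extension_of_card_eq hcard
  have hBu : B i₀ = u := hB i₀ rfl
  set C : ℝ := (2 * Real.pi * σ ^ 2) ^ (-(d : ℝ) / 2) with hC
  set F : EuclideanSpace ℝ (Fin d) → ℝ :=
    fun y => (if b ≤ y i₀ then (1:ℝ) else 0) * (C * Real.exp (-‖y‖ ^ 2 / (2 * σ ^ 2))) with hF
  -- step 1: rotate
  have step1 : ∫ x, (if b ≤ (inner ℝ u x : ℝ) then (1:ℝ) else 0) * rho d σ x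
      = ∫ y, F y := by
    rw [← B.repr.measurePreserving.integral_comp B.repr.toHomeomorph.measurableEmbedding F]
    refine MeasureTheory.integral_congr_ae (Filter.Eventually.of_forall fun x => ?_)
    show _ = F (B.repr x)
    rw [hF]
    simp only
    rw [B.repr.norm_map x, B.repr_apply_apply x i₀, hBu, hC]
    rfl
  -- step 2: to pi measure
  have step2 : ∫ y, F y = ∫ y : Fin d → ℝ,
      (if b ≤ y i₀ then (1:ℝ) else 0) * (C * Real.exp (-(∑ i, (y i) ^ 2) / (2 * σ ^ 2))) := by
    have hm := (EuclideanSpace.volume_preserving_symm_measurableEquiv_toLp (Fin d)).symm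
    rw [← hm.integral_comp (MeasurableEquiv.measurableEmbedding _) F]
    refine MeasureTheory.integral_congr_ae (Filter.Eventually.of_forall fun y => ?_)
    show F ((MeasurableEquiv.toLp 2 (Fin d → ℝ)) y) = _
    rw [hF]
    simp only
    have happ : ∀ i, ((MeasurableEquiv.toLp 2 (Fin d → ℝ)) y) i = y i := fun i => rfl
    have hnorm : ‖(MeasurableEquiv.toLp 2 (Fin d → ℝ)) y‖ ^ 2 = ∑ i, (y i) ^ 2 := by
      rw [EuclideanSpace.norm_eq, Real.sq_sqrt (by positivity)]
      refine Finset.sum_congr rfl fun i _ => ?_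
      rw [happ, Real.norm_eq_abs, sq_abs]
    rw [hnorm, happ]
  -- step 3: product structure
  set Fi : Fin d → ℝ → ℝ :=
    fun i s => (if i = i₀ → b ≤ s then (1:ℝ) else 0) * g1 σ s with hFi
  have hCprod : C = ((2 * Real.pi * σ ^ 2) ^ (-(1 : ℝ) / 2)) ^ d := by
    rw [hC, ← Real.rpow_natCast ((2 * Real.pi * σ ^ 2) ^ (-(1:ℝ)/2)) d,
      ← Real.rpow_mul (by positivity)]
    congr 1
    ring
  have hprod : ∀ y : Fin d → ℝ, (∏ i, Fi i (y i)) =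
      (if b ≤ y i₀ then (1:ℝ) else 0) * (C * Real.exp (-(∑ i, (y i) ^ 2) / (2 * σ ^ 2))) := by
    intro y
    by_cases hby : b ≤ y i₀
    · rw [if_pos hby, one_mul]
      have : ∀ i ∈ Finset.univ, Fi i (y i) = g1 σ (y i) := by
        intro i _
        rw [hFi]
        simp only
        rw [if_pos (fun hi => by rw [hi]; exact hby), one_mul]
      rw [Finset.prod_congr rfl this]
      unfold g1
      rw [Finset.prod_mul_distrib, Finset.prod_const, Finset.card_univ, Fintype.card_fin,
        ← Real.exp_sum, ← hCprod]
      congr 1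
      rw [← Finset.sum_div, ← Finset.sum_neg_distrib]
    · rw [if_neg hby, zero_mul]
      refine Finset.prod_eq_zero (Finset.mem_univ i₀) ?_
      rw [hFi]
      simp [hby]
  have hint : ∀ i, ∫ s, Fi i s = if i = i₀ then Phi (-b / σ) else 1 := by
    intro i
    by_cases hi : i = i₀
    · rw [if_pos hi, hi]
      have : ∀ s, Fi i₀ s = Set.indicator (Ici b) (g1 σ) s := by
        intro s
        rw [hFi]
        by_cases hbs : b ≤ s <;> simp [Set.indicator_apply, hbs]
      simp_rw [this]
      rw [MeasureTheory.integral_indicator measurableSet_Ici,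
        MeasureTheory.integral_Ici_eq_integral_Ioi, integral_g1_Ioi hσ]
    · rw [if_neg hi]
      have : ∀ s, Fi i s = g1 σ s := by
        intro s
        rw [hFi]
        simp [hi]
      simp_rw [this]
      exact integral_g1 hσ
  calc ∫ x, (if b ≤ (inner ℝ u x : ℝ) then (1:ℝ) else 0) * rho d σ x
      = ∫ y : Fin d → ℝ, ∏ i, Fi i (y i) := by
        rw [step1, step2]
        exact MeasureTheory.integral_congr_ae
          (Filter.Eventually.of_forall fun y => (hprod y).symm)
    _ = ∏ i, ∫ s, Fi i s := MeasureTheory.integral_fintype_prod_eq_prod Fi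
    _ = Phi (-b / σ) := by
        simp_rw [hint]
        rw [Finset.prod_ite_eq' Finset.univ i₀ (fun _ => Phi (-b / σ)),
          if_pos (Finset.mem_univ i₀)]

lemma integrable_rho_shift (hσ : 0 < σ) (x : EuclideanSpace ℝ (Fin d)) :
    Integrable (fun ζ => rho d σ (ζ - x)) :=
  (integrable_rho hσ).comp_sub_right x

lemma integrable_ind_mul (hσ : 0 < σ) {S : Set (EuclideanSpace ℝ (Fin d))}
    (hS : MeasurableSet S) (x : EuclideanSpace ℝ (Fin d)) :
    Integrable (fun ζ => (if ζ ∈ S then (1:ℝ) else 0) * rho d σ (ζ - x)) := by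
  refine (integrable_rho_shift hσ x).bdd_mul (c := 1) ?_ (Filter.Eventually.of_forall fun ζ => ?_)
  · exact (Measurable.ite hS measurable_const measurable_const).aestronglyMeasurable
  · split <;> simp

lemma key (hσ : 0 < σ) {A : Set (EuclideanSpace ℝ (Fin d))} (hA : MeasurableSet A)
    {x₁ x₂ : EuclideanSpace ℝ (Fin d)} (hne : x₁ ≠ x₂) {p₁ p₂ : ℝ}
    (hp₁ : p₁ ∈ Ioo (0:ℝ) 1) (hp₂ : p₂ ∈ Ioo (0:ℝ) 1)
    (e₁ : p₁ = ∫ ζ, (if ζ ∈ A then (1:ℝ) else 0) * rho d σ (ζ - x₁))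
    (e₂ : p₂ = ∫ ζ, (if ζ ∈ A then (1:ℝ) else 0) * rho d σ (ζ - x₂)) :
    PhiInv p₁ - PhiInv p₂ ≤ ‖x₁ - x₂‖ / σ := by
  set δ : ℝ := ‖x₁ - x₂‖ with hδdef
  have hδ : 0 < δ := by
    rw [hδdef, norm_pos_iff]
    exact sub_ne_zero_of_ne hne
  set u : EuclideanSpace ℝ (Fin d) := δ⁻¹ • (x₁ - x₂) with hudef
  have hu : ‖u‖ = 1 := by
    rw [hudef, norm_smul, Real.norm_eq_abs, abs_of_pos (by positivity), ← hδdef,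
      inv_mul_cancel₀ hδ.ne']
  have hδu : δ • u = x₁ - x₂ := by
    rw [hudef, smul_smul, mul_inv_cancel₀ hδ.ne', one_smul]
  set c₁ : ℝ := PhiInv p₁ with hc₁
  set a : ℝ := σ * c₁ with ha
  set H : Set (EuclideanSpace ℝ (Fin d)) :=
    {ζ | -a ≤ (inner ℝ u (ζ - x₁) : ℝ)} with hHdef
  have hH : MeasurableSet H := by
    have hc : Continuous (fun ζ : EuclideanSpace ℝ (Fin d) => (inner ℝ u (ζ - x₁) : ℝ)) :=
      Continuous.inner continuous_const (continuous_id.sub continuous_const)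
    exact hc.measurable measurableSet_Ici
  -- value of I(x₁, H)
  have hI1H : ∫ ζ, (if ζ ∈ H then (1:ℝ) else 0) * rho d σ (ζ - x₁) = p₁ := by
    have h0 := integral_add_left_eq_self (μ := volume)
      (fun ζ => (if ζ ∈ H then (1:ℝ) else 0) * rho d σ (ζ - x₁)) x₁
    rw [← h0]
    have h1 : ∀ η, (if x₁ + η ∈ H then (1:ℝ) else 0) * rho d σ (x₁ + η - x₁)
        = (if -a ≤ (inner ℝ u η : ℝ) then (1:ℝ) else 0) * rho d σ η := by
      intro η
      simp only [hHdef, mem_setOf_eq, add_sub_cancel_left]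
    simp_rw [h1]
    rw [marginal hσ hu (-a), neg_neg, ha, mul_div_cancel_left₀ c₁ hσ.ne']
    exact Phi_PhiInv hp₁
  -- value of I(x₂, H)
  have hI2H : ∫ ζ, (if ζ ∈ H then (1:ℝ) else 0) * rho d σ (ζ - x₂) = Phi (c₁ - δ / σ) := by
    have h0 := integral_add_left_eq_self (μ := volume)
      (fun ζ => (if ζ ∈ H then (1:ℝ) else 0) * rho d σ (ζ - x₂)) x₂
    rw [← h0]
    have h1 : ∀ η, (if x₂ + η ∈ H then (1:ℝ) else 0) * rho d σ (x₂ + η - x₂)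
        = (if δ - a ≤ (inner ℝ u η : ℝ) then (1:ℝ) else 0) * rho d σ η := by
      intro η
      have h2 : x₂ + η - x₁ = η - δ • u := by rw [hδu]; abel
      have h3 : (inner ℝ u (x₂ + η - x₁) : ℝ) = (inner ℝ u η : ℝ) - δ := by
        rw [h2, inner_sub_right, real_inner_smul_right, real_inner_self_eq_norm_sq, hu]
        norm_num
      have hiff : (-a ≤ (inner ℝ u η : ℝ) - δ) ↔ (δ - a ≤ (inner ℝ u η : ℝ)) := by
        constructor <;> intro h <;> linarith
      simp only [hHdef, mem_setOf_eq, add_sub_cancel_left, h3, hiff]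
    simp_rw [h1]
    rw [marginal hσ hu (δ - a)]
    congr 1
    rw [ha]
    field_simp
    ring
  -- likelihood ratio identity
  have hρ : ∀ ζ, rho d σ (ζ - x₂) = rho d σ (ζ - x₁) *
      Real.exp (-(2 * δ * (inner ℝ u (ζ - x₁) : ℝ) + δ ^ 2) / (2 * σ ^ 2)) := by
    intro ζ
    have hsplit : ζ - x₂ = (ζ - x₁) + δ • u := by rw [hδu]; abel
    unfold rho
    rw [hsplit, norm_add_sq_real, real_inner_smul_right, real_inner_comm,
      norm_smul, Real.norm_eq_abs, abs_of_pos hδ, hu, mul_one]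
    rw [show (-(‖ζ - x₁‖ ^ 2 + 2 * (δ * (inner ℝ u (ζ - x₁) : ℝ)) + δ ^ 2) / (2 * σ ^ 2) : ℝ)
        = -‖ζ - x₁‖ ^ 2 / (2 * σ ^ 2) + -(2 * δ * (inner ℝ u (ζ - x₁) : ℝ) + δ ^ 2) / (2 * σ ^ 2) by
      field_simp
      ring, Real.exp_add]
    ring
  set R : ℝ := Real.exp (-(2 * δ * (-a) + δ ^ 2) / (2 * σ ^ 2)) with hR
  -- pointwise Neyman-Pearson inequality
  have hpoint : ∀ ζ, R * (((if ζ ∈ A then (1:ℝ) else 0) - (if ζ ∈ H then (1:ℝ) else 0))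
        * rho d σ (ζ - x₁))
      ≤ ((if ζ ∈ A then (1:ℝ) else 0) - (if ζ ∈ H then (1:ℝ) else 0)) * rho d σ (ζ - x₂) := by
    intro ζ
    set t : ℝ := (inner ℝ u (ζ - x₁) : ℝ) with ht
    have hρpos := rho_pos hσ (ζ - x₁)
    by_cases hAz : ζ ∈ A <;> by_cases hHz : ζ ∈ H
    · simp [hAz, hHz]
    · -- in A, not in H : t < -a, coefficient 1
      have htlt : t < -a := by
        by_contra hcon
        push_neg at hcon
        exact hHz hcon
      rw [if_pos hAz, if_neg hHz, sub_zero, one_mul, one_mul, hρ ζ, ← ht]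
      have hcmp : R ≤ Real.exp (-(2 * δ * t + δ ^ 2) / (2 * σ ^ 2)) := by
        rw [hR]
        apply Real.exp_le_exp.2
        rw [div_le_div_iff₀ (by positivity) (by positivity)]
        nlinarith [mul_pos (mul_pos hδ (show (0:ℝ) < σ ^ 2 by positivity))
          (show (0:ℝ) < -(t + a) by linarith)]
      nlinarith [mul_le_mul_of_nonneg_left hcmp hρpos.le]
    · -- not in A, in H : t ≥ -a, coefficient -1
      have htge : -a ≤ t := hHz
      rw [if_neg hAz, if_pos hHz, zero_sub, hρ ζ, ← ht]
      have hcmp : Real.exp (-(2 * δ * t + δ ^ 2) / (2 * σ ^ 2)) ≤ R := by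
        rw [hR]
        apply Real.exp_le_exp.2
        rw [div_le_div_iff₀ (by positivity) (by positivity)]
        nlinarith [mul_nonneg (mul_nonneg hδ.le (show (0:ℝ) ≤ σ ^ 2 by positivity))
          (show (0:ℝ) ≤ t + a by linarith)]
      nlinarith [mul_le_mul_of_nonneg_left hcmp hρpos.le]
    · simp [hAz, hHz]
  -- integrate the inequality
  have hintA1 := integrable_ind_mul hσ hA x₁
  have hintA2 := integrable_ind_mul hσ hA x₂
  have hintH1 := integrable_ind_mul hσ hH x₁
  have hintH2 := integrable_ind_mul hσ hH x₂
  have hlhs : Integrable (fun ζ => R * (((if ζ ∈ A then (1:ℝ) else 0)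
      - (if ζ ∈ H then (1:ℝ) else 0)) * rho d σ (ζ - x₁))) := by
    refine Integrable.const_mul ?_ R
    have := hintA1.sub hintH1
    refine this.congr (Filter.Eventually.of_forall fun ζ => ?_)
    simp only [Pi.sub_apply]
    ring
  have hrhs : Integrable (fun ζ => ((if ζ ∈ A then (1:ℝ) else 0)
      - (if ζ ∈ H then (1:ℝ) else 0)) * rho d σ (ζ - x₂)) := by
    have := hintA2.sub hintH2
    refine this.congr (Filter.Eventually.of_forall fun ζ => ?_)
    simp only [Pi.sub_apply]
    ring
  have hmono := MeasureTheory.integral_mono hlhs hrhs hpoint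
  have hexp1 : ∫ ζ, R * (((if ζ ∈ A then (1:ℝ) else 0)
      - (if ζ ∈ H then (1:ℝ) else 0)) * rho d σ (ζ - x₁)) = R * (p₁ - p₁) := by
    rw [MeasureTheory.integral_const_mul]
    congr 1
    have : (fun ζ => ((if ζ ∈ A then (1:ℝ) else 0) - (if ζ ∈ H then (1:ℝ) else 0))
        * rho d σ (ζ - x₁)) = fun ζ => (if ζ ∈ A then (1:ℝ) else 0) * rho d σ (ζ - x₁)
        - (if ζ ∈ H then (1:ℝ) else 0) * rho d σ (ζ - x₁) := by
      funext ζ; ring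
    rw [this, MeasureTheory.integral_sub hintA1 hintH1, hI1H, ← e₁]
  have hexp2 : ∫ ζ, ((if ζ ∈ A then (1:ℝ) else 0)
      - (if ζ ∈ H then (1:ℝ) else 0)) * rho d σ (ζ - x₂) = p₂ - Phi (c₁ - δ / σ) := by
    have : (fun ζ => ((if ζ ∈ A then (1:ℝ) else 0) - (if ζ ∈ H then (1:ℝ) else 0))
        * rho d σ (ζ - x₂)) = fun ζ => (if ζ ∈ A then (1:ℝ) else 0) * rho d σ (ζ - x₂)
        - (if ζ ∈ H then (1:ℝ) else 0) * rho d σ (ζ - x₂) := by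
      funext ζ; ring
    rw [this, MeasureTheory.integral_sub hintA2 hintH2, hI2H, ← e₂]
  rw [hexp1, hexp2, sub_self, mul_zero] at hmono
  -- conclude
  have hPhile : Phi (c₁ - δ / σ) ≤ p₂ := by linarith
  have := PhiInv_ge_of_Phi_le hp₂ hPhile
  rw [hc₁] at *
  linarith

theorem hard_rs_class_probs (d K : ℕ) (σ : ℝ) (hσ : 0 < σ)
    (f : EuclideanSpace ℝ (Fin d) → Fin K) (hf : Measurable f)
    (P : Fin K → EuclideanSpace ℝ (Fin d) → ℝ)
    (hP : ∀ c x, P c x =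
      ∫ η, (if f (x + η) = c then (1 : ℝ) else 0) ∂(gaussMeasure d σ)) :
    (∀ c x, P c x ∈ Set.Icc (0 : ℝ) 1) ∧
    (∀ x, ∑ c, P c x = 1) ∧
    (∀ c, ∀ x₁ x₂, P c x₁ ∈ Set.Ioo (0 : ℝ) 1 → P c x₂ ∈ Set.Ioo (0 : ℝ) 1 →
      |PhiInv (P c x₁) - PhiInv (P c x₂)| ≤ (1 / σ) * ‖x₁ - x₂‖) := by
  haveI : IsProbabilityMeasure (gaussMeasure d σ) := isProbability_gaussMeasure hσ
  have hmeas : ∀ (c : Fin K) (x : EuclideanSpace ℝ (Fin d)),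
      Measurable (fun η => if f (x + η) = c then (1:ℝ) else 0) := by
    intro c x
    have hset : MeasurableSet {η : EuclideanSpace ℝ (Fin d) | f (x + η) = c} :=
      (hf.comp (measurable_const_add x)) (measurableSet_singleton c)
    exact Measurable.ite hset measurable_const measurable_const
  have hint : ∀ (c : Fin K) (x : EuclideanSpace ℝ (Fin d)),
      Integrable (fun η => if f (x + η) = c then (1:ℝ) else 0) (gaussMeasure d σ) := by
    intro c x
    refine Integrable.mono' (integrable_const 1) (hmeas c x).aestronglyMeasurable ?_
    refine Filter.Eventually.of_forall fun η => ?_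
    split <;> simp
  refine ⟨?_, ?_, ?_⟩
  · intro c x
    rw [hP]
    constructor
    · exact MeasureTheory.integral_nonneg fun η => by split <;> norm_num
    · calc ∫ η, (if f (x + η) = c then (1:ℝ) else 0) ∂(gaussMeasure d σ)
          ≤ ∫ _η, (1:ℝ) ∂(gaussMeasure d σ) := by
            refine MeasureTheory.integral_mono (hint c x) (integrable_const 1) fun η => ?_
            split <;> norm_num
        _ = 1 := by simp
  · intro x
    simp_rw [hP]
    rw [← MeasureTheory.integral_finset_sum Finset.univ (fun c _ => hint c x)]
    have : ∀ η, (∑ c, if f (x + η) = c then (1:ℝ) else 0) = 1 := by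
      intro η
      rw [Finset.sum_ite_eq Finset.univ (f (x + η)) (fun _ => (1:ℝ)),
        if_pos (Finset.mem_univ _)]
    simp_rw [this]
    simp
  · intro c x₁ x₂ hp₁ hp₂
    by_cases hne : x₁ = x₂
    · subst hne
      simp only [sub_self, abs_zero]
      positivity
    · have hPx : ∀ x, P c x = ∫ ζ, (if ζ ∈ f ⁻¹' {c} then (1:ℝ) else 0) * rho d σ (ζ - x) := by
        intro x
        rw [hP, integral_gaussMeasure hσ]
        rw [← integral_add_left_eq_self (μ := volume)
          (fun ζ => (if ζ ∈ f ⁻¹' {c} then (1:ℝ) else 0) * rho d σ (ζ - x)) x]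
        refine MeasureTheory.integral_congr_ae (Filter.Eventually.of_forall fun η => ?_)
        simp only [mem_preimage, mem_singleton_iff, add_sub_cancel_left]
        ring
      have hA : MeasurableSet (f ⁻¹' {c}) := hf (measurableSet_singleton c)
      have h1 := key hσ hA hne hp₁ hp₂ (hPx x₁) (hPx x₂)
      have h2 := key hσ hA (Ne.symm hne) hp₂ hp₁ (hPx x₂) (hPx x₁)
      rw [norm_sub_rev] at h2
      rw [abs_sub_le_iff]
      constructor
      · calc PhiInv (P c x₁) - PhiInv (P c x₂) ≤ ‖x₁ - x₂‖ / σ := h1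
          _ = (1 / σ) * ‖x₁ - x₂‖ := by ring
      · calc PhiInv (P c x₂) - PhiInv (P c x₁) ≤ ‖x₁ - x₂‖ / σ := h2
          _ = (1 / σ) * ‖x₁ - x₂‖ := by ring
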